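/- Let μ, ρ ∈ ℝ and let b : I → ℝ be a twice differentiable, nowhere-vanishing function on an interval I satisfying (b²)''(s) + b'(s)·(b²)'(s) − 2(ρ(1 − b(s)) − μ²/b(s)) = 0 for all s ∈ I. Then the function f(s) = e^{2b(s)}·(b(s)²·b'(s)² + ρ(1 − b(s))² + μ²) is constant on I. -/

import Mathlib

/-- If a twice differentiable nowhere-vanishing function `b` on an interval `I` satisfies the
Euler–Lagrange equation `(b²)'' + b'(b²)' − 2(ρ(1−b) − μ²/b) = 0` (the equation of the
curvature energy `Θ_μ` in the 2-space form of curvature `ρ`, in the variable `b = μ/κ`),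
then `f(s) = e^{2b}(b²(b')² + ρ(1−b)² + μ²)` is constant on `I`. -/
theorem first_integral_in_b (μ ρ : ℝ) (I : Set ℝ) (hIopen : IsOpen I)
    (hIconn : I.OrdConnected)
    (b : ℝ → ℝ) (hb0 : ∀ s ∈ I, b s ≠ 0)
    (hb1 : ∀ s ∈ I, DifferentiableAt ℝ b s)
    (hb2 : ∀ s ∈ I, DifferentiableAt ℝ (deriv b) s)
    (hode : ∀ s ∈ I,
      deriv (deriv (fun t => (b t) ^ 2)) s + deriv b s * deriv (fun t => (b t) ^ 2) s
        - 2 * (ρ * (1 - b s) - μ ^ 2 / b s) = 0) :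
    ∀ s ∈ I, ∀ t ∈ I,
      Real.exp (2 * b s) * ((b s) ^ 2 * (deriv b s) ^ 2 + ρ * (1 - b s) ^ 2 + μ ^ 2)
        = Real.exp (2 * b t) * ((b t) ^ 2 * (deriv b t) ^ 2 + ρ * (1 - b t) ^ 2 + μ ^ 2) := by
  set f : ℝ → ℝ := fun s =>
    Real.exp (2 * b s) * ((b s) ^ 2 * (deriv b s) ^ 2 + ρ * (1 - b s) ^ 2 + μ ^ 2) with hf
  -- derivative of b^2 on I
  have hd1 : ∀ s ∈ I, deriv (fun t => (b t) ^ 2) s = 2 * b s * deriv b s := by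
    intro s hs
    have := ((hb1 s hs).hasDerivAt.fun_pow 2).deriv
    simpa [mul_comm, mul_assoc, mul_left_comm] using this
  have key : ∀ s ∈ I, HasDerivAt f 0 s := by
    intro s hs
    have hb' : HasDerivAt b (deriv b s) s := (hb1 s hs).hasDerivAt
    have hg : HasDerivAt (deriv b) (deriv (deriv b) s) s := (hb2 s hs).hasDerivAt
    -- second derivative of b^2
    have heq : deriv (fun t => (b t) ^ 2) =ᶠ[nhds s] fun t => 2 * b t * deriv b t :=
      Filter.eventuallyEq_of_mem (hIopen.mem_nhds hs) (fun t ht => hd1 t ht)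
    have hd2 : HasDerivAt (fun t => 2 * b t * deriv b t)
        (2 * deriv b s * deriv b s + 2 * b s * deriv (deriv b) s) s :=
      (hb'.const_mul 2).mul hg
    have hd2' : deriv (deriv (fun t => (b t) ^ 2)) s
        = 2 * deriv b s * deriv b s + 2 * b s * deriv (deriv b) s := by
      rw [heq.deriv_eq]; exact hd2.deriv
    -- the ODE, cleared of denominators
    have hODE := hode s hs
    rw [hd2', hd1 s hs] at hODE
    have hB := hb0 s hs
    have hODE2 : 2 * deriv b s * deriv b s * b s + 2 * b s ^ 2 * deriv (deriv b) s
        + 2 * b s ^ 2 * (deriv b s) ^ 2 - 2 * ρ * b s * (1 - b s) + 2 * μ ^ 2 = 0 := by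
      field_simp at hODE
      nlinarith [hODE, sq_nonneg (b s)]
    -- build HasDerivAt for f
    have H1 : HasDerivAt (fun t => Real.exp (2 * b t)) (Real.exp (2 * b s) * (2 * deriv b s)) s :=
      (hb'.const_mul 2).exp
    have H2 : HasDerivAt (fun t => (b t) ^ 2 * (deriv b t) ^ 2 + ρ * (1 - b t) ^ 2 + μ ^ 2)
        (2 * b s * deriv b s * (deriv b s) ^ 2
          + (b s) ^ 2 * (2 * deriv b s * deriv (deriv b) s)
          + ρ * (2 * (1 - b s) * (0 - deriv b s))) s := by
      have := (((hb'.pow 2).mul (hg.pow 2)).add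
        ((((hasDerivAt_const s (1:ℝ)).sub hb').pow 2).const_mul ρ)).add_const (μ ^ 2)
      simpa using this
    have H := H1.mul H2
    have : Real.exp (2 * b s) * (2 * deriv b s)
          * ((b s) ^ 2 * (deriv b s) ^ 2 + ρ * (1 - b s) ^ 2 + μ ^ 2)
        + Real.exp (2 * b s) * (2 * b s * deriv b s * (deriv b s) ^ 2
          + (b s) ^ 2 * (2 * deriv b s * deriv (deriv b) s)
          + ρ * (2 * (1 - b s) * (0 - deriv b s))) = 0 := by
      linear_combination Real.exp (2 * b s) * deriv b s * hODE2
    rw [this] at H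
    exact H
  -- constancy on the convex set I
  intro s hs t ht
  have hconv : Convex ℝ I := hIconn.convex
  have hdiff : DifferentiableOn ℝ f I := fun x hx => ((key x hx).differentiableAt).differentiableWithinAt
  have h0 : ∀ x ∈ I, fderivWithin ℝ f I x = 0 := by
    intro x hx
    rw [fderivWithin_of_isOpen hIopen hx]
    have := (key x hx).hasFDerivAt.fderiv
    rw [this]
    ext
    simp
  exact hconv.is_const_of_fderivWithin_eq_zero hdiff h0 hs ht
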